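/- Let L̂, L and Ξ: L̂ → L be as in the context. Then Ξ is injective if and only if #{i ∈ {0,…,p} : m^{(i)} > 1} ≤ 1. -/
import Mathlib


/-!
STATEMENT 18: the canonical map `Ξ : L̂ → L` is injective iff at most one point has
`m^{(i)} > 1`.
-/
open Matrix BigOperators

noncomputable section

/-! ### Formal Laurent series preliminaries -/

/-- Evaluation of a polynomial at `z⁻¹`. -/
def polyZinv (q : Polynomial ℂ) : LaurentSeries ℂ :=
  q.sum fun k c => HahnSeries.single (-(k : ℤ)) c

/-- A Laurent series lies in `ℂ[[z]]`. -/
def Tame (f : LaurentSeries ℂ) : Prop := ∀ k : ℤ, k < 0 → f.coeff k = 0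

/-- A Laurent series is a principal part (class representative in `ℂ((z))/ℂ[[z]]`). -/
def IsPrincipal (f : LaurentSeries ℂ) : Prop := ∀ k : ℤ, 0 ≤ k → f.coeff k = 0

/-- `GL(n, ℂ[[z]])`. -/
abbrev GLps (n : ℕ) := (Matrix (Fin n) (Fin n) (PowerSeries ℂ))ˣ

/-- `GL(n, ℂ)`. -/
abbrev GLc (n : ℕ) := (Matrix (Fin n) (Fin n) ℂ)ˣ

/-- The inclusion `GL(n, ℂ[[z]]) → GL(n, ℂ((z)))`. -/
def glMap {n : ℕ} : GLps n →* (Matrix (Fin n) (Fin n) (LaurentSeries ℂ))ˣ :=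
  Units.map ((HahnSeries.ofPowerSeries ℤ ℂ).mapMatrix).toMonoidHom

/-- The inclusion `GL(n, ℂ) → GL(n, ℂ((z)))`. -/
def glC {n : ℕ} : GLc n →* (Matrix (Fin n) (Fin n) (LaurentSeries ℂ))ˣ :=
  Units.map ((HahnSeries.C : ℂ →+* LaurentSeries ℂ).mapMatrix).toMonoidHom

/-- Conjugation of a matrix of Laurent series by `X ∈ GL(n, ℂ[[z]])`. -/
def conjPS {n : ℕ} (X : GLps n) (B : Matrix (Fin n) (Fin n) (LaurentSeries ℂ)) :
    Matrix (Fin n) (Fin n) (LaurentSeries ℂ) :=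
  (glMap X).val * B * ((glMap X)⁻¹).val

/-- Conjugation by a constant invertible matrix. -/
def conjC {n : ℕ} (g : GLc n) (B : Matrix (Fin n) (Fin n) (LaurentSeries ℂ)) :
    Matrix (Fin n) (Fin n) (LaurentSeries ℂ) :=
  (glC g).val * B * ((glC g)⁻¹).val

/-- The matrix of `z^k`-coefficients of a matrix of Laurent series. -/
def coeffM {n : ℕ} (M : Matrix (Fin n) (Fin n) (LaurentSeries ℂ)) (k : ℤ) :
    Matrix (Fin n) (Fin n) ℂ := fun a b => (M a b).coeff k

/-! ### Finite quivers and representations of double quivers -/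

/-- A finite quiver. -/
structure FinQuiver where
  V : Type
  E : Type
  [fintypeV : Fintype V]
  [decEqV : DecidableEq V]
  [fintypeE : Fintype E]
  [decEqE : DecidableEq E]
  src : E → V
  tgt : E → V

attribute [instance] FinQuiver.fintypeV FinQuiver.decEqV FinQuiver.fintypeE FinQuiver.decEqE

namespace FinQuiver

variable (Q : FinQuiver) (α : Q.V → ℕ)

/-- The representation space of the double quiver `Q̄` with dimension vector `α`. -/
abbrev Rep :=
  ∀ e : Q.E, Matrix (Fin (α (Q.tgt e))) (Fin (α (Q.src e))) ℂ ×
    Matrix (Fin (α (Q.src e))) (Fin (α (Q.tgt e))) ℂ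

/-- The group `G = ∏_{a ∈ Q₀} GL(α_a, ℂ)`. -/
abbrev GGroup := ∀ a : Q.V, (Matrix (Fin (α a)) (Fin (α a)) ℂ)ˣ

variable {Q α}

/-- The action of `G` on `Rep(Q̄,α)`. -/
def act (g : Q.GGroup α) (x : Q.Rep α) : Q.Rep α := fun e =>
  ((g (Q.tgt e)).val * (x e).1 * ((g (Q.src e))⁻¹).val,
   (g (Q.src e)).val * (x e).2 * ((g (Q.tgt e))⁻¹).val)

/-- The moment map `μ`. -/
def mu (x : Q.Rep α) (a : Q.V) : Matrix (Fin (α a)) (Fin (α a)) ℂ :=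
  (∑ e : Q.E, if h : Q.tgt e = a then
      (Matrix.reindex (finCongr (congrArg α h)) (finCongr (congrArg α h))
        ((x e).1 * (x e).2)) else 0)
  - ∑ e : Q.E, if h : Q.src e = a then
      (Matrix.reindex (finCongr (congrArg α h)) (finCongr (congrArg α h))
        ((x e).2 * (x e).1)) else 0

/-- A collection of subspaces invariant under all the components of `x`. -/
def InvFamily (x : Q.Rep α) (W : ∀ a : Q.V, Submodule ℂ (Fin (α a) → ℂ)) : Prop :=
  ∀ e : Q.E, (∀ v ∈ W (Q.src e), (x e).1.mulVec v ∈ W (Q.tgt e)) ∧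
             (∀ v ∈ W (Q.tgt e), (x e).2.mulVec v ∈ W (Q.src e))

/-- `x` is an irreducible representation of the double quiver. -/
def Irred (x : Q.Rep α) : Prop :=
  ∀ W : ∀ a : Q.V, Submodule ℂ (Fin (α a) → ℂ),
    InvFamily x W → (∀ a, W a = ⊥) ∨ (∀ a, W a = ⊤)

variable (Q)

/-! ### The root system of a finite quiver -/

/-- The Euler form. -/
def euler (β γ : Q.V → ℤ) : ℤ :=
  (∑ a : Q.V, β a * γ a) - ∑ e : Q.E, β (Q.src e) * γ (Q.tgt e)

/-- The symmetrized Euler form. -/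
def bform (β γ : Q.V → ℤ) : ℤ := euler Q β γ + euler Q γ β

/-- `q(β) = (β,β)/2`. -/
def qform (β : Q.V → ℤ) : ℤ := euler Q β β

/-- `p(β) = 1 − q(β)`. -/
def pform (β : Q.V → ℤ) : ℤ := 1 - qform Q β

/-- A vertex with no edge-loop. -/
def LoopFree (a : Q.V) : Prop := ∀ e : Q.E, ¬(Q.src e = a ∧ Q.tgt e = a)

/-- The coordinate vector at a vertex. -/
def eps (a : Q.V) : Q.V → ℤ := fun b => if b = a then 1 else 0

/-- The fundamental reflection at a vertex. -/
def reflV (a : Q.V) (β : Q.V → ℤ) : Q.V → ℤ := β - bform Q β (eps Q a) • eps Q a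

/-- One reflection step. -/
def reflStep (β γ : Q.V → ℤ) : Prop := ∃ a : Q.V, LoopFree Q a ∧ γ = reflV Q a β

/-- The real roots. -/
def realRoots : Set (Q.V → ℤ) :=
  {β | ∃ a : Q.V, LoopFree Q a ∧ Relation.ReflTransGen (reflStep Q) (eps Q a) β}

/-- The support. -/
def supp (β : Q.V → ℤ) : Set Q.V := {a | β a ≠ 0}

/-- Connectedness of the support of `β` in the underlying graph of `Q`. -/
def ConnSupport (β : Q.V → ℤ) : Prop :=
  ∀ a ∈ supp Q β, ∀ b ∈ supp Q β,
    Relation.ReflTransGen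
      (fun u v => u ∈ supp Q β ∧ v ∈ supp Q β ∧
        ∃ e : Q.E, (Q.src e = u ∧ Q.tgt e = v) ∨ (Q.src e = v ∧ Q.tgt e = u)) a b

/-- The fundamental set. -/
def fundSet : Set (Q.V → ℤ) :=
  {β | β ≠ 0 ∧ (∀ a, 0 ≤ β a) ∧ (∀ a, LoopFree Q a → bform Q β (eps Q a) ≤ 0) ∧
    ConnSupport Q β}

/-- The imaginary roots. -/
def imRoots : Set (Q.V → ℤ) :=
  {β | ∃ γ, (γ ∈ fundSet Q ∨ -γ ∈ fundSet Q) ∧ Relation.ReflTransGen (reflStep Q) γ β}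

/-- The roots. -/
def roots : Set (Q.V → ℤ) := realRoots Q ∪ imRoots Q

/-- The positive roots. -/
def posRoots : Set (Q.V → ℤ) := {β ∈ roots Q | ∀ a, 0 ≤ β a}

/-- `λ·β`. -/
def lamDot (lam : Q.V → ℂ) (β : Q.V → ℤ) : ℂ := ∑ a : Q.V, lam a * (β a : ℂ)

variable {Q}

end FinQuiver

/-! ### The data of a collection of HTL normal forms -/

/-- A collection `B = (B^{(0)}, …, B^{(p)})` of unramified HTL normal forms of size `n`,
`B^{(i)} = diag(q^{(i)}_j(z⁻¹)I_{n^{(i)}_j} + R^{(i)}_j z⁻¹)_{j=1,…,m^{(i)}}`,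
together with eigenvalue data `ξ^{[i,j]}_1, …, ξ^{[i,j]}_{e_{[i,j]}}` with
`∏_k (R^{(i)}_j − ξ^{[i,j]}_k) = 0`. -/
structure ConnData where
  n : ℕ
  hn : 0 < n
  p : ℕ
  m : Fin (p+1) → ℕ
  hm : ∀ i, 0 < m i
  nb : (i : Fin (p+1)) → Fin (m i) → ℕ
  hnb : ∀ i j, 0 < nb i j
  hsum : ∀ i, ∑ j, nb i j = n
  q : (i : Fin (p+1)) → Fin (m i) → Polynomial ℂ
  hq0 : ∀ i j, (q i j).coeff 0 = 0
  hq1 : ∀ i j, (q i j).coeff 1 = 0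
  hqd : ∀ i (j j' : Fin (m i)), j ≠ j' → q i j ≠ q i j'
  hreg : ∀ i, i ≠ 0 → m i = 1 → ∀ j, q i j = 0
  R : (i : Fin (p+1)) → (j : Fin (m i)) → Matrix (Fin (nb i j)) (Fin (nb i j)) ℂ
  e : (i : Fin (p+1)) → Fin (m i) → ℕ
  he : ∀ i j, 0 < e i j
  xi : (i : Fin (p+1)) → (j : Fin (m i)) → Fin (e i j) → ℂ
  hxi : ∀ i j,
    (List.ofFn fun k => R i j - xi i j k • (1 : Matrix (Fin (nb i j)) (Fin (nb i j)) ℂ)).prod = 0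

namespace ConnData

variable (D : ConnData)

/-- `i ∈ I_irr`. -/
def isIrr (i : Fin (D.p+1)) : Prop := 1 < D.m i ∨ i = 0

instance : DecidablePred D.isIrr := fun _ => inferInstanceAs (Decidable (_ ∨ _))

/-- The set of indices of irregular type. -/
abbrev IrrIdx := {i : Fin (D.p+1) // D.isIrr i}

/-- The set of indices of irregular type other than `0`. -/
abbrev IrrNz := {i : Fin (D.p+1) // D.isIrr i ∧ i ≠ 0}

/-- The unique block index at a point. -/
def j1 (i : Fin (D.p+1)) : Fin (D.m i) := ⟨0, D.hm i⟩

/-- `d_i(j,j') = deg(q^{(i)}_j − q^{(i)}_{j'}) − 2`. -/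
def dd (i : Fin (D.p+1)) (j j' : Fin (D.m i)) : ℕ := ((D.q i j) - (D.q i j')).natDegree - 2

/-- The vertex set of the quiver: mid vertices `[i,j]` (for `i ∈ I_irr`) and leg
vertices `[i,j,k]`, `1 ≤ k ≤ e_{[i,j]}−1`. -/
abbrev Vq :=
  (Σ i : D.IrrIdx, Fin (D.m i.1)) ⊕ (Σ i : Fin (D.p+1), Σ j : Fin (D.m i), Fin (D.e i j - 1))

/-- The vertex `[i,j]`, `i ∈ I_irr`. -/
def vmid (i : D.IrrIdx) (j : Fin (D.m i.1)) : D.Vq := Sum.inl ⟨i, j⟩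

/-- `0 ∈ I_irr`. -/
def irr0 : D.IrrIdx := ⟨0, Or.inr rfl⟩

/-- The vertex `[0,j]`. -/
def vmid0 (j : Fin (D.m 0)) : D.Vq := Sum.inl ⟨D.irr0, j⟩

/-- The leg vertex `[i,j,k+1]` (`k` is 0-based). -/
def vleg (i : Fin (D.p+1)) (j : Fin (D.m i)) (k : Fin (D.e i j - 1)) : D.Vq :=
  Sum.inr ⟨i, j, k⟩

/-- Arrows `[0,j] → [i,j']`, `i ∈ I_irr \ {0}`. -/
abbrev Arr1 := Fin (D.m 0) × (Σ i : D.IrrNz, Fin (D.m i.1))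
/-- `d_i(j,j')` arrows `[i,j] → [i,j']` for `i ∈ I_irr`, `j < j'`. -/
abbrev Arr2 := Σ i : D.IrrIdx, Σ jj : {x : Fin (D.m i.1) × Fin (D.m i.1) // x.1 < x.2},
  Fin (D.dd i.1 jj.1.1 jj.1.2)
/-- Leg arrows `[i,j,k] → [i,j,k−1]`, `k ≥ 2`. -/
abbrev Arr3 := Σ i : Fin (D.p+1), Σ j : Fin (D.m i), Fin (D.e i j - 2)
/-- Arrows `[i,j,1] → [i,j]`, `i ∈ I_irr`. -/
abbrev Arr4 := Σ i : D.IrrIdx, {j : Fin (D.m i.1) // 2 ≤ D.e i.1 j}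
/-- Arrows `[i,1,1] → [0,j]`, `i ∈ I_reg`. -/
abbrev Arr5 := {i : Fin (D.p+1) // ¬ D.isIrr i ∧ 2 ≤ D.e i (D.j1 i)} × Fin (D.m 0)

/-- The arrow set of the quiver. -/
abbrev Arr := D.Arr1 ⊕ D.Arr2 ⊕ D.Arr3 ⊕ D.Arr4 ⊕ D.Arr5

/-- Sources of arrows. -/
def qsrc : D.Arr → D.Vq
  | .inl (j, ⟨_, _⟩) => D.vmid0 j
  | .inr (.inl ⟨i, jj, _⟩) => D.vmid i jj.1.1
  | .inr (.inr (.inl ⟨i, j, t⟩)) => D.vleg i j ⟨t.1 + 1, by have := t.isLt; omega⟩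
  | .inr (.inr (.inr (.inl ⟨i, j⟩))) => D.vleg i.1 j.1 ⟨0, by have := j.2; omega⟩
  | .inr (.inr (.inr (.inr (i, _)))) => D.vleg i.1 (D.j1 i.1) ⟨0, by have := i.2.2; omega⟩

/-- Targets of arrows. -/
def qtgt : D.Arr → D.Vq
  | .inl (_, ⟨i, j'⟩) => D.vmid ⟨i.1, i.2.1⟩ j'
  | .inr (.inl ⟨i, jj, _⟩) => D.vmid i jj.1.2
  | .inr (.inr (.inl ⟨i, j, t⟩)) => D.vleg i j ⟨t.1, by have := t.isLt; omega⟩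
  | .inr (.inr (.inr (.inl ⟨i, j⟩))) => D.vmid i j.1
  | .inr (.inr (.inr (.inr (_, j)))) => D.vmid0 j

/-- The quiver `Q` associated with `B`. -/
def quiv : FinQuiver := FinQuiver.mk (V := D.Vq) (E := D.Arr) D.qsrc D.qtgt

/-- The dimension vector `α`. -/
def alphaV : D.Vq → ℕ
  | .inl ⟨i, j⟩ => D.nb i.1 j
  | .inr ⟨i, j, k⟩ =>
      ((List.ofFn fun l : Fin (k.1 + 1) =>
          D.R i j - D.xi i j ⟨l.1, by have := l.isLt; have := k.isLt; omega⟩ •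
            (1 : Matrix (Fin (D.nb i j)) (Fin (D.nb i j)) ℂ)).prod).rank

/-- The dimension vector `α` as an integral vector. -/
def alphaZ : D.Vq → ℤ := fun a => (D.alphaV a : ℤ)

/-- `Σ_{i ∈ I_reg} ξ^{[i,1]}_1`. -/
def regSumXi : ℂ :=
  ∑ i : Fin (D.p+1), if D.isIrr i then 0 else D.xi i (D.j1 i) ⟨0, D.he _ _⟩

/-- The parameter `λ`. -/
def lamV : D.Vq → ℂ
  | .inl ⟨⟨i, _⟩, j⟩ =>
      if h : i = 0 then - D.xi 0 (h ▸ j) ⟨0, D.he _ _⟩ - D.regSumXi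
      else - D.xi i j ⟨0, D.he _ _⟩
  | .inr ⟨i, j, k⟩ =>
      D.xi i j ⟨k.1, by have := k.isLt; omega⟩ - D.xi i j ⟨k.1 + 1, by have := k.isLt; omega⟩

/-- The lattice `L ⊆ ℤ^{Q₀}`. -/
def latt : Set (D.Vq → ℤ) :=
  {β | ∀ i : D.IrrNz,
    (∑ j : Fin (D.m 0), β (D.vmid0 j)) = ∑ j : Fin (D.m i.1), β (D.vmid ⟨i.1, i.2.1⟩ j)}

/-- `L`-irreducibility of a representation: no nontrivial proper invariant collection
of subspaces whose dimension vector lies in `L`. -/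
def LIrred {αd : D.Vq → ℕ} (x : D.quiv.Rep αd) : Prop :=
  ∀ W : ∀ a : D.Vq, Submodule ℂ (Fin (αd a) → ℂ),
    FinQuiver.InvFamily x W →
    (fun a => (Module.finrank ℂ (W a) : ℤ)) ∈ D.latt →
    (∀ a, W a = ⊥) ∨ (∀ a, W a = ⊤)

/-- The block matrix formed by the components of `x` along the arrows `[0,j] → [i,j']`
for a fixed `i ∈ I_irr \ {0}`. -/
def detMat {αd : D.Vq → ℕ} (x : D.quiv.Rep αd) (i : D.IrrNz) :
    Matrix (Σ j' : Fin (D.m i.1), Fin (αd (D.vmid ⟨i.1, i.2.1⟩ j')))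
      (Σ j : Fin (D.m 0), Fin (αd (D.vmid0 j))) ℂ :=
  fun rc cc => (x (Sum.inl (cc.1, ⟨i, rc.1⟩))).1 rc.2 cc.2

/-- The determinant conditions: the block matrices along the arrows `[0,j] → [i,j']`
are invertible for all `i ∈ I_irr \ {0}`. -/
def DetCond {αd : D.Vq → ℕ} (x : D.quiv.Rep αd) : Prop :=
  ∀ i : D.IrrNz, Function.Bijective (Matrix.mulVecLin (D.detMat x i))

/-- The set underlying `M_λ(Q,α)^dif`. -/
def MdifSub (lam : D.Vq → ℂ) (αd : D.Vq → ℕ) :=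
  {x : D.quiv.Rep αd //
    (∀ a, FinQuiver.mu x a = lam a • (1 : Matrix (Fin (αd a)) (Fin (αd a)) ℂ)) ∧
    D.LIrred x ∧ D.DetCond x}

/-- `M_λ(Q,α)^dif`: the quotient of the `L`-irreducible locus (with the determinant
conditions) of `μ⁻¹(λ)` by `G`. -/
def Mdif (lam : D.Vq → ℂ) (αd : D.Vq → ℕ) :=
  Quot (fun x y : D.MdifSub lam αd => ∃ g : D.quiv.GGroup αd, FinQuiver.act g x.1 = y.1)

/-- Identification of the disjoint union of the blocks of `B^{(i)}` with `Fin n`. -/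
def sigmaEquiv (i : Fin (D.p+1)) : (Σ j : Fin (D.m i), Fin (D.nb i j)) ≃ Fin D.n :=
  Fintype.equivFinOfCardEq (by simpa using D.hsum i)

/-- The matrix of the HTL normal form `B^{(i)}`. -/
def BmatAt (i : Fin (D.p+1)) : Matrix (Fin D.n) (Fin D.n) (LaurentSeries ℂ) :=
  Matrix.reindex (D.sigmaEquiv i) (D.sigmaEquiv i)
    (Matrix.blockDiagonal' fun j =>
      (fun a b => (if a = b then polyZinv (D.q i j) else 0) +
        HahnSeries.single (-1 : ℤ) (D.R i j a b)))

/-- Membership in the moduli space data: a tuple of principal parts, lying in the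
truncated orbits of the `B^{(i)}`, with vanishing total residue, which is
irreducible. -/
def MBMem (A : Fin (D.p+1) → Matrix (Fin D.n) (Fin D.n) (LaurentSeries ℂ)) : Prop :=
  (∀ i a b, IsPrincipal (A i a b)) ∧
  (∀ i, ∃ X : GLps D.n, ∀ a b, Tame ((A i - conjPS X (D.BmatAt i)) a b)) ∧
  (∑ i, coeffM (A i) (-1)) = 0 ∧
  (∀ W : Submodule ℂ (Fin D.n → ℂ),
    (∀ i (k : ℤ), ∀ v ∈ W, (coeffM (A i) k).mulVec v ∈ W) → W = ⊥ ∨ W = ⊤)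

/-- The set underlying the moduli space `M(B)`. -/
def MBSub := {A : Fin (D.p+1) → Matrix (Fin D.n) (Fin D.n) (LaurentSeries ℂ) // D.MBMem A}

/-- The moduli space `M(B)` of stable meromorphic connections on trivial bundles with
formal types `B`: the quotient by simultaneous `GL(n,ℂ)`-conjugation. -/
def MB := Quot (fun A A' : D.MBSub => ∃ g : GLc D.n, ∀ i, conjC g (A.1 i) = A'.1 i)

/-- The index set `J` of tuples `𝐢 = ([i,j_i])_{0 ≤ i ≤ p}`. -/
abbrev Jtype := (i : Fin (D.p+1)) → Fin (D.m i)

/-- The set of leg vertices. -/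
abbrev LegIdx := Σ i : Fin (D.p+1), Σ j : Fin (D.m i), Fin (D.e i j - 1)

/-- The leg vertex as a vertex of the quiver. -/
def legV (a : D.LegIdx) : D.Vq := Sum.inr a

/-- `ε_𝐢 ∈ ℤ^{Q₀}`: entry `1` at `[i,j_i]` for `i ∈ I_irr`, `0` elsewhere. -/
def epsJ (jj : D.Jtype) : D.Vq → ℤ
  | .inl ⟨⟨i, _⟩, j⟩ => if j = jj i then 1 else 0
  | .inr _ => 0

/-- The index set `C = {c_a : a ∈ J ∪ Q₀^leg}` of the generators of `L̂`. -/
abbrev CIdx := D.Jtype ⊕ D.LegIdx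

/-- The value of the bilinear form of `L̂` on two leg generators. -/
def legForm (a a' : D.LegIdx) : ℤ :=
  if h : a.1 = a'.1 then
    (if _h2 : (h ▸ a.2.1) = a'.2.1 then
      (if a.2.2.1 = a'.2.2.1 then 2
       else if a.2.2.1 = a'.2.2.1 + 1 ∨ a'.2.2.1 = a.2.2.1 + 1 then -1 else 0)
     else 0)
  else 0

/-- The bilinear form of `L̂` on the generators:
`(c_𝐢, c_𝐢') = 2 − Σ_{i : j_i ≠ j'_i} (d_i(j_i,j'_i) + 2)`,
`(c_𝐢, c_{[i,j,k]}) = −1` iff `j = j_i` and `k = 1`,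
`(c_{[i,j,k]}, c_{[i',j',k']}) = 2, −1, 0` according to coincidence/adjacency. -/
def genForm : D.CIdx → D.CIdx → ℤ
  | .inl jj, .inl jj' =>
      2 - ∑ i : Fin (D.p+1),
        (if jj i ≠ jj' i then ((D.dd i (jj i) (jj' i) : ℤ) + 2) else 0)
  | .inl jj, .inr a => if a.2.1 = jj a.1 ∧ a.2.2.1 = 0 then -1 else 0
  | .inr a, .inl jj => if a.2.1 = jj a.1 ∧ a.2.2.1 = 0 then -1 else 0
  | .inr a, .inr a' => D.legForm a a'

/-- The symmetric bilinear form of the Kac–Moody root lattice `L̂`. -/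
def hatForm (γ γ' : D.CIdx → ℤ) : ℤ :=
  ∑ c : D.CIdx, ∑ c' : D.CIdx, γ c * γ' c' * D.genForm c c'

/-- The generator `c_a` of `L̂`. -/
def hatGen (c0 : D.CIdx) : D.CIdx → ℤ := fun c => if c = c0 then 1 else 0

/-- The simple reflection of `L̂` in the simple root `c_a`. -/
def hatRefl (c0 : D.CIdx) (γ : D.CIdx → ℤ) : D.CIdx → ℤ :=
  γ - D.hatForm γ (D.hatGen c0) • D.hatGen c0

/-- The canonical map `Ξ : L̂ → L`:
`Ξ(γ)_{[i,j]} = Σ_{𝐢 ∈ J, j_i = j} γ_{c_𝐢}` and `Ξ(γ)_{[i,j,k]} = γ_{c_{[i,j,k]}}`. -/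
def XiMap (γ : D.CIdx → ℤ) : D.Vq → ℤ
  | .inl ⟨⟨i, _⟩, j⟩ => ∑ jj : D.Jtype, (if jj i = j then γ (Sum.inl jj) else 0)
  | .inr a => γ (Sum.inr a)

/-- The reflection `s_𝐢(β) = β − (β,ε_𝐢)ε_𝐢` on `ℤ^{Q₀}`. -/
def sJ (jj : D.Jtype) (β : D.Vq → ℤ) : D.Vq → ℤ :=
  β - FinQuiver.bform D.quiv β (D.epsJ jj) • D.epsJ jj

/-- The action of the generator `s_a`, `a ∈ J ∪ Q₀^leg`, on `ℤ^{Q₀}`: `s_𝐢` for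
`a = 𝐢 ∈ J` and the simple reflection at the leg vertex otherwise. -/
def sDown (c0 : D.CIdx) (β : D.Vq → ℤ) : D.Vq → ℤ :=
  match c0 with
  | .inl jj => D.sJ jj β
  | .inr a => FinQuiver.reflV D.quiv (D.legV a) β

end ConnData

end

open ConnData FinQuiver in
/-- Auxiliary: summing an indicator over `Jtype`. -/
theorem Xi_aux_sum_indicator (D : ConnData) (a : D.Jtype) (i : Fin (D.p+1)) (j : Fin (D.m i)) :
    (∑ jj : D.Jtype, (if jj i = j then (if jj = a then (1:ℤ) else 0) else 0))
      = if a i = j then 1 else 0 := by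
  rw [Finset.sum_eq_single a]
  · by_cases h : a i = j <;> simp [h]
  · intro b _ hb
    by_cases h : b i = j <;> simp [h, hb]
  · intro h; exact absurd (Finset.mem_univ a) h

open ConnData FinQuiver in
/-- STATEMENT 18. -/
theorem Xi_injective_iff (D : ConnData) :
    Function.Injective D.XiMap ↔ Fintype.card {i : Fin (D.p+1) // 1 < D.m i} ≤ 1 := by
  constructor
  · intro hinj
    by_contra h
    push_neg at h
    obtain ⟨⟨i1, h1⟩, ⟨i2, h2⟩, hne⟩ := Fintype.one_lt_card_iff.mp h
    have hne' : i1 ≠ i2 := fun e => hne (Subtype.ext e)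
    set base : D.Jtype := fun i => ⟨0, D.hm i⟩ with hbase
    set c : D.Jtype := Function.update base i1 ⟨1, h1⟩ with hc
    set d : D.Jtype := Function.update base i2 ⟨1, h2⟩ with hd
    set b : D.Jtype := Function.update c i2 ⟨1, h2⟩ with hb
    set γ : D.CIdx → ℤ := fun x => match x with
      | .inl jj => (if jj = base then 1 else 0) + (if jj = b then 1 else 0)
          - (if jj = c then 1 else 0) - (if jj = d then 1 else 0)
      | .inr _ => 0 with hγ
    have hXi : D.XiMap γ = D.XiMap (fun _ => 0) := by
      funext v
      cases v with
      | inr a => simp [ConnData.XiMap, hγ]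
      | inl x =>
        obtain ⟨⟨i, hi⟩, j⟩ := x
        show (∑ jj : D.Jtype, if jj i = j then γ (Sum.inl jj) else 0) = _
        have expand : ∀ jj : D.Jtype, (if jj i = j then γ (Sum.inl jj) else 0)
            = (if jj i = j then (if jj = base then (1:ℤ) else 0) else 0)
              + (if jj i = j then (if jj = b then (1:ℤ) else 0) else 0)
              - (if jj i = j then (if jj = c then (1:ℤ) else 0) else 0)
              - (if jj i = j then (if jj = d then (1:ℤ) else 0) else 0) := by
          intro jj
          by_cases hcond : jj i = j <;> simp [hcond, hγ]
        simp only [expand]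
        rw [Finset.sum_sub_distrib, Finset.sum_sub_distrib, Finset.sum_add_distrib,
          Xi_aux_sum_indicator, Xi_aux_sum_indicator, Xi_aux_sum_indicator,
          Xi_aux_sum_indicator]
        have hXi0 : (∑ jj : D.Jtype, if jj i = j then (fun _ : D.CIdx => (0:ℤ)) (Sum.inl jj) else 0) = 0 := by
          simp
        rcases eq_or_ne i i1 with rfl | hii1
        · have hbv : b i = ⟨1, h1⟩ := by
            simp [hb, hc, Function.update_of_ne hne', Function.update_self]
          have hcv : c i = ⟨1, h1⟩ := by simp [hc, Function.update_self]
          have hdv : d i = base i := by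
            simp [hd, Function.update_of_ne hne']
          rw [hbv, hcv, hdv]
          show _ = D.XiMap (fun _ => 0) (Sum.inl ⟨⟨i, hi⟩, j⟩)
          simp only [ConnData.XiMap, hXi0]
          ring
        · rcases eq_or_ne i i2 with rfl | hii2
          · have hbv : b i = ⟨1, h2⟩ := by simp [hb, Function.update_self]
            have hcv : c i = base i := by
              simp [hc, Function.update_of_ne hii1]
            have hdv : d i = ⟨1, h2⟩ := by simp [hd, Function.update_self]
            rw [hbv, hcv, hdv]
            show _ = D.XiMap (fun _ => 0) (Sum.inl ⟨⟨i, hi⟩, j⟩)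
            simp only [ConnData.XiMap, hXi0]
            ring
          · have hcv : c i = base i := by simp [hc, Function.update_of_ne hii1]
            have hdv : d i = base i := by simp [hd, Function.update_of_ne hii2]
            have hbv : b i = base i := by
              simp [hb, hc, Function.update_of_ne hii2, Function.update_of_ne hii1]
            rw [hbv, hcv, hdv]
            show _ = D.XiMap (fun _ => 0) (Sum.inl ⟨⟨i, hi⟩, j⟩)
            simp only [ConnData.XiMap, hXi0]
            ring
    have hγ0 : γ = fun _ => 0 := hinj hXi
    have h10 : γ (Sum.inl base) = 0 := by rw [hγ0]
    have hbne : base ≠ b := by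
      intro he
      have : base i1 = b i1 := by rw [he]
      have hbv : b i1 = ⟨1, h1⟩ := by
        simp [hb, hc, Function.update_of_ne hne', Function.update_self]
      rw [hbv] at this
      simpa [hbase] using congrArg Fin.val this
    have hcne : base ≠ c := by
      intro he
      have : base i1 = c i1 := by rw [he]
      rw [hc, Function.update_self] at this
      simpa [hbase] using congrArg Fin.val this
    have hdne : base ≠ d := by
      intro he
      have : base i2 = d i2 := by rw [he]
      rw [hd, Function.update_self] at this
      simpa [hbase] using congrArg Fin.val this
    simp [hγ, hbne, hcne, hdne] at h10
  · intro hcard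
    have key : ∃ istar : D.IrrIdx, ∀ jj jj' : D.Jtype, jj istar.1 = jj' istar.1 → jj = jj' := by
      by_cases h : ∃ i0, 1 < D.m i0
      · obtain ⟨i0, hi0⟩ := h
        refine ⟨⟨i0, Or.inl hi0⟩, fun jj jj' he => funext fun i => ?_⟩
        rcases eq_or_ne i i0 with rfl | hii
        · exact he
        · have hm1 : D.m i ≤ 1 := by
            by_contra h'
            push_neg at h'
            have : 1 < Fintype.card {i : Fin (D.p+1) // 1 < D.m i} :=
              Fintype.one_lt_card_iff.mpr ⟨⟨i, h'⟩, ⟨i0, hi0⟩, by simp [hii]⟩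
            omega
          have := (jj i).isLt
          have := (jj' i).isLt
          exact Fin.ext (by omega)
      · push_neg at h
        refine ⟨D.irr0, fun jj jj' _ => funext fun i => ?_⟩
        have := (jj i).isLt
        have := (jj' i).isLt
        have := h i
        exact Fin.ext (by omega)
    obtain ⟨⟨istar, histar⟩, hstar⟩ := key
    intro γ γ' h
    funext x
    cases x with
    | inr a => exact congrFun h (Sum.inr a)
    | inl jj =>
      have hv := congrFun h (Sum.inl ⟨⟨istar, histar⟩, jj istar⟩)
      have hsum : ∀ δ : D.CIdx → ℤ,
          D.XiMap δ (Sum.inl ⟨⟨istar, histar⟩, jj istar⟩) = δ (Sum.inl jj) := by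
        intro δ
        show (∑ jj' : D.Jtype, if jj' istar = jj istar then δ (Sum.inl jj') else 0) = _
        rw [Finset.sum_eq_single jj]
        · simp
        · intro b _ hb
          have : ¬ b istar = jj istar := fun he => hb (hstar _ _ he)
          simp [this]
        · intro h'; exact absurd (Finset.mem_univ jj) h'
      rw [hsum, hsum] at hv
      exact hv
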